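/- Let g : ℕ → ℕ be monotone (strictly increasing) with g(n) ≥ n² for all n ≥ 2. If k, n, j are natural numbers with n ≥ 2 and g^j(2) ≤ g^k(n), then j ≤ k + ⌈log₂ log₂ n⌉ (in particular j ≤ k + log₂ log₂ n + 1). -/
import Mathlib


open Real

lemma iter_lower (g : ℕ → ℕ) (hg : ∀ n, 2 ≤ n → n ^ 2 ≤ g n) :
    ∀ m : ℕ, 2 ^ (2 ^ m) ≤ g^[m] 2 := by
  intro m
  induction m with
  | zero => simp
  | succ m ih =>
      have h2' : 2 ≤ 2 ^ (2 ^ m) := by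
        calc 2 = 2 ^ 1 := rfl
          _ ≤ 2 ^ (2 ^ m) := Nat.pow_le_pow_right (by norm_num) Nat.one_le_two_pow
      have h2 : 2 ≤ g^[m] 2 := le_trans h2' ih
      calc 2 ^ (2 ^ (m + 1)) = (2 ^ (2 ^ m)) ^ 2 := by ring
        _ ≤ (g^[m] 2) ^ 2 := Nat.pow_le_pow_left ih 2
        _ ≤ g (g^[m] 2) := hg _ h2
        _ = g^[m + 1] 2 := (Function.iterate_succ_apply' g m 2).symm

/-- If `g` is strictly increasing with `g n ≥ n ^ 2` for `n ≥ 2`, and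
`g^[j] 2 ≤ g^[k] n` with `n ≥ 4`, then `j ≤ k + ⌈log₂ log₂ n⌉`, in particular
`j ≤ k + log₂ log₂ n + 1`. -/
theorem iterate_length_bound (g : ℕ → ℕ) (hmono : StrictMono g)
    (hg : ∀ n, 2 ≤ n → n ^ 2 ≤ g n) (j k n : ℕ) (hn : 4 ≤ n)
    (h : g^[j] 2 ≤ g^[k] n) :
    (j : ℝ) ≤ k + ⌈Real.logb 2 (Real.logb 2 n)⌉ ∧
      (j : ℝ) ≤ k + Real.logb 2 (Real.logb 2 n) + 1 := by
  have hb : (1 : ℝ) < 2 := one_lt_two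
  have hlogn : (2 : ℝ) ≤ Real.logb 2 n := by
    have h4 : (4 : ℝ) ≤ n := by exact_mod_cast hn
    calc (2 : ℝ) = Real.logb 2 4 := by
          rw [show (4 : ℝ) = 2 ^ (2 : ℕ) by norm_num, Real.logb_pow,
            Real.logb_self_eq_one hb]; norm_num
      _ ≤ Real.logb 2 n := Real.logb_le_logb_of_le hb (by norm_num) h4
  have hL : (1 : ℝ) ≤ Real.logb 2 (Real.logb 2 n) := by
    calc (1 : ℝ) = Real.logb 2 2 := (Real.logb_self_eq_one hb).symm
      _ ≤ _ := Real.logb_le_logb_of_le hb (by norm_num) hlogn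
  have key : (j : ℝ) ≤ k + Real.logb 2 (Real.logb 2 n) := by
    rcases le_or_gt j k with hjk | hjk
    · have : (j : ℝ) ≤ k := by exact_mod_cast hjk
      linarith
    · set m := j - k with hm
      have hjkm : j = k + m := by omega
      rw [hjkm, Function.iterate_add_apply] at h
      have hmn : g^[m] 2 ≤ n := (hmono.iterate k).le_iff_le.mp h
      have hpow : (2 : ℕ) ^ (2 ^ m) ≤ n := le_trans (iter_lower g hg m) hmn
      have hpowR : (2 : ℝ) ^ (2 ^ m : ℕ) ≤ (n : ℝ) := by exact_mod_cast hpow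
      have h1 : ((2 : ℕ) ^ m : ℝ) ≤ Real.logb 2 n := by
        have := Real.logb_le_logb_of_le hb (by positivity) hpowR
        rw [Real.logb_pow, Real.logb_self_eq_one hb, mul_one] at this
        exact_mod_cast this
      have h2 : (m : ℝ) ≤ Real.logb 2 (Real.logb 2 n) := by
        have hp : (0 : ℝ) < ((2 : ℕ) ^ m : ℝ) := by positivity
        have := Real.logb_le_logb_of_le hb hp h1
        rwa [show ((2:ℕ)^m : ℝ) = (2:ℝ)^m by push_cast; ring, Real.logb_pow,
          Real.logb_self_eq_one hb, mul_one] at this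
      have : (j : ℝ) = k + m := by exact_mod_cast hjkm
      linarith
  constructor
  · have := Int.le_ceil (Real.logb 2 (Real.logb 2 n))
    linarith
  · linarith
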